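/- Let 𝐚 = [a_{kj}]_{k,j=1}^3 be a real symmetric positive definite 3×3 matrix, κ₁ > 0 and ω > 0. Then Γ(·,ω) satisfies the Sommerfeld-type radiation conditions associated with the operator A₁ = Σ a_{kj}∂_k∂_j + ω²κ₁: there exist constants C > 0 and R > 0 such that for all x with |x| ≥ R and all k ∈ {1,2,3}, |Γ(x,ω)| ≤ C/|x| and |∂Γ(x,ω)/∂x_k − i ξ_k(x/|x|) Γ(x,ω)| ≤ C/|x|². -/

import Mathlib

open MeasureTheory Filter
open scoped Topology BigOperators

noncomputable section

/-- Three-dimensional Euclidean space. -/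
abbrev E3 := EuclideanSpace ℝ (Fin 3)

/-- The inner product `𝐚⁻¹ x · x`. -/
def qf (a : Matrix (Fin 3) (Fin 3) ℝ) (x : E3) : ℝ :=
  ∑ i, a⁻¹.mulVec (fun j => x j) i * x i

/-- The radiating fundamental solution
`Γ(x,ω) = −exp(i ω κ₁^{1/2} (𝐚⁻¹x·x)^{1/2}) / (4π (det 𝐚)^{1/2} (𝐚⁻¹x·x)^{1/2})`. -/
def Gamma (a : Matrix (Fin 3) (Fin 3) ℝ) (κ₁ ω : ℝ) (x : E3) : ℂ :=
  -Complex.exp (Complex.I * (ω : ℂ) * (Real.sqrt κ₁ : ℂ) * (Real.sqrt (qf a x) : ℂ)) /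
    ((4 * Real.pi * Real.sqrt a.det * Real.sqrt (qf a x) : ℝ) : ℂ)

/-- Directional (partial) derivative `∂f/∂x_k`. -/
def pd (f : E3 → ℂ) (k : Fin 3) (x : E3) : ℂ :=
  fderiv ℝ f x (EuclideanSpace.single k 1)

/-- `ξ(η) = ω κ₁^{1/2} (𝐚⁻¹η·η)^{−1/2} 𝐚⁻¹η` for a (unit) vector `η`. -/
def xiVec (a : Matrix (Fin 3) (Fin 3) ℝ) (κ₁ ω : ℝ) (η : Fin 3 → ℝ) : Fin 3 → ℝ :=
  (ω * Real.sqrt κ₁ * (Real.sqrt (∑ i, a⁻¹.mulVec η i * η i))⁻¹) • a⁻¹.mulVec η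

lemma qf_eq (a : Matrix (Fin 3) (Fin 3) ℝ) (y : E3) :
    qf a y = ∑ i, ∑ j, a⁻¹ i j * (y j * y i) := by
  simp only [qf, Matrix.mulVec, dotProduct, Finset.sum_mul, mul_assoc]

lemma qf_pos (a : Matrix (Fin 3) (Fin 3) ℝ) (ha : a.PosDef) {y : E3} (hy : y ≠ 0) :
    0 < qf a y := by
  have hne : (fun j => y j) ≠ 0 := by
    intro h0
    exact hy (by ext j; exact congrFun h0 j)
  have h := (Matrix.posDef_iff_dotProduct_mulVec.mp ha.inv).2 hne
  simpa [qf, dotProduct, mul_comm] using h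

lemma qf_smul (a : Matrix (Fin 3) (Fin 3) ℝ) (t : ℝ) (y : E3) :
    qf a (t • y) = t ^ 2 * qf a y := by
  simp only [qf_eq, PiLp.smul_apply, smul_eq_mul, Finset.mul_sum]
  exact Finset.sum_congr rfl fun i _ => Finset.sum_congr rfl fun j _ => by ring

lemma qf_cont (a : Matrix (Fin 3) (Fin 3) ℝ) : Continuous (qf a) := by
  have : (qf a) = fun y : E3 => ∑ i, ∑ j, a⁻¹ i j * (y j * y i) := funext (qf_eq a)
  rw [this]; fun_prop

lemma coord_le_norm (y : E3) (j : Fin 3) : |y j| ≤ ‖y‖ := by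
  rw [EuclideanSpace.norm_eq, ← Real.sqrt_sq_eq_abs]
  apply Real.sqrt_le_sqrt
  have : |y j| ^ 2 ≤ ∑ i, ‖y i‖ ^ 2 := by
    have := Finset.single_le_sum (f := fun i => ‖y i‖ ^ 2)
      (fun i _ => sq_nonneg _) (Finset.mem_univ j)
    simpa [Real.norm_eq_abs, sq_abs] using this
  simpa [sq_abs] using this

lemma hasFDerivAt_qf (a : Matrix (Fin 3) (Fin 3) ℝ) (x : E3) :
    HasFDerivAt (𝕜 := ℝ) (qf a)
      (∑ i, ∑ j, a⁻¹ i j • ((x j) • (EuclideanSpace.proj (𝕜 := ℝ) i) +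
        (x i) • (EuclideanSpace.proj (𝕜 := ℝ) j))) x := by
  have : (qf a) = fun y : E3 => ∑ i, ∑ j, a⁻¹ i j * (y j * y i) := funext (qf_eq a)
  rw [this]
  apply HasFDerivAt.fun_sum
  intro i _
  apply HasFDerivAt.fun_sum
  intro j _
  have hmul : HasFDerivAt (𝕜 := ℝ) (fun y : E3 => y j * y i)
      ((x j) • (EuclideanSpace.proj (𝕜 := ℝ) i) + (x i) • (EuclideanSpace.proj (𝕜 := ℝ) j)) x :=
    (EuclideanSpace.proj (𝕜 := ℝ) (ι := Fin 3) j).hasFDerivAt.mul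
      (EuclideanSpace.proj (𝕜 := ℝ) (ι := Fin 3) i).hasFDerivAt
  exact hmul.const_mul _

lemma exists_lam (a : Matrix (Fin 3) (Fin 3) ℝ) (ha : a.PosDef) :
    ∃ lam > (0:ℝ), ∀ y : E3, lam * ‖y‖ ^ 2 ≤ qf a y := by
  obtain ⟨u, hu_mem, hu_min⟩ := (isCompact_sphere (0:E3) 1).exists_isMinOn
    ⟨EuclideanSpace.single 0 1, by simp⟩ ((qf_cont a).continuousOn)
  have hu_norm : ‖u‖ = 1 := by simpa using mem_sphere_zero_iff_norm.mp hu_mem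
  have hu_ne : u ≠ 0 := by intro h; rw [h] at hu_norm; simp at hu_norm
  refine ⟨qf a u, qf_pos a ha hu_ne, fun y => ?_⟩
  rcases eq_or_ne y 0 with rfl | hy
  · simp [qf_eq]
  · have hny : 0 < ‖y‖ := norm_pos_iff.mpr hy
    set v : E3 := ‖y‖⁻¹ • y with hv
    have hvn : ‖v‖ = 1 := by
      rw [hv, norm_smul, norm_inv, norm_norm, inv_mul_cancel₀ hny.ne']
    have hvm : v ∈ Metric.sphere (0:E3) 1 := by simpa [mem_sphere_zero_iff_norm] using hvn
    have h1 : qf a u ≤ qf a v := hu_min hvm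
    have h2 : qf a y = ‖y‖ ^ 2 * qf a v := by
      rw [hv, ← qf_smul, smul_inv_smul₀ hny.ne']
    rw [h2]
    calc qf a u * ‖y‖ ^ 2 ≤ qf a v * ‖y‖ ^ 2 :=
          mul_le_mul_of_nonneg_right h1 (sq_nonneg _)
      _ = ‖y‖ ^ 2 * qf a v := by ring

lemma mulVec_bound (a : Matrix (Fin 3) (Fin 3) ℝ) :
    ∃ M > (0:ℝ), ∀ (y : E3) (k : Fin 3), |a⁻¹.mulVec (fun j => y j) k| ≤ M * ‖y‖ := by
  refine ⟨(∑ i, ∑ j, |a⁻¹ i j|) + 1, by positivity, fun y k => ?_⟩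
  have h1 : |a⁻¹.mulVec (fun j => y j) k| ≤ ∑ j, |a⁻¹ k j| * ‖y‖ := by
    rw [Matrix.mulVec, dotProduct]
    refine (Finset.abs_sum_le_sum_abs _ _).trans (Finset.sum_le_sum fun j _ => ?_)
    rw [abs_mul]
    exact mul_le_mul_of_nonneg_left (coord_le_norm y j) (abs_nonneg _)
  rw [← Finset.sum_mul] at h1
  refine h1.trans (mul_le_mul_of_nonneg_right ?_ (norm_nonneg _))
  have h2 : ∑ j, |a⁻¹ k j| ≤ ∑ i, ∑ j, |a⁻¹ i j| :=
    Finset.single_le_sum (f := fun i => ∑ j, |a⁻¹ i j|)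
      (fun i _ => Finset.sum_nonneg fun j _ => abs_nonneg _) (Finset.mem_univ k)
  linarith

lemma hasDerivAt_h (c : ℂ) (K t : ℝ) (hK : 0 < K) (ht : 0 < t) :
    HasDerivAt (fun s : ℝ => -Complex.exp (c * s) / ((K * s : ℝ) : ℂ))
      ((c - (t:ℂ)⁻¹) * (-Complex.exp (c * t) / ((K * t : ℝ) : ℂ))) t := by
  have h1 : HasDerivAt (fun s : ℝ => ((s : ℝ) : ℂ)) 1 t := by
    simpa using (hasDerivAt_id t).ofReal_comp
  have hexp : HasDerivAt (fun s : ℝ => Complex.exp (c * s))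
      (Complex.exp (c * t) * (c * 1)) t := (h1.const_mul c).cexp
  have hden : HasDerivAt (fun s : ℝ => ((K * s : ℝ) : ℂ)) ((K : ℂ) * 1) t := by
    have heq : (fun s : ℝ => ((K * s : ℝ) : ℂ)) = fun s : ℝ => (K : ℂ) * ((s : ℝ) : ℂ) := by
      funext s; push_cast; ring
    rw [heq]; exact h1.const_mul _
  have hne : ((K * t : ℝ) : ℂ) ≠ 0 := by
    simp only [ne_eq, Complex.ofReal_eq_zero]
    positivity
  have hdiv := (hexp.fun_neg).fun_div hden hne
  refine hdiv.congr_deriv ?_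
  have htne : ((t : ℝ) : ℂ) ≠ 0 := by
    simp only [ne_eq, Complex.ofReal_eq_zero]; exact ht.ne'
  have hKne : ((K : ℝ) : ℂ) ≠ 0 := by
    simp only [ne_eq, Complex.ofReal_eq_zero]; exact hK.ne'
  push_cast
  field_simp
  ring

lemma Lq_apply (a : Matrix (Fin 3) (Fin 3) ℝ) (hsym : a.IsSymm) (x : E3) (k : Fin 3) :
    (∑ i, ∑ j, a⁻¹ i j • ((x j) • (EuclideanSpace.proj (𝕜 := ℝ) i) +
        (x i) • (EuclideanSpace.proj (𝕜 := ℝ) j))) (EuclideanSpace.single k 1)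
      = 2 * a⁻¹.mulVec (fun j => x j) k := by
  have hbsym : a⁻¹.IsSymm := by
    rw [Matrix.IsSymm, Matrix.transpose_nonsing_inv, hsym]
  have hb : ∀ i j, a⁻¹ j i = a⁻¹ i j := hbsym.apply
  simp only [ContinuousLinearMap.sum_apply, ContinuousLinearMap.smul_apply,
    ContinuousLinearMap.add_apply, PiLp.proj_apply, EuclideanSpace.single_apply,
    Matrix.mulVec, dotProduct, smul_eq_mul, Fin.sum_univ_three]
  fin_cases k <;>
    · simp [hb 0 1, hb 0 2, hb 1 2]
      try ring

lemma Gamma_eq_comp (a : Matrix (Fin 3) (Fin 3) ℝ) (κ₁ ω : ℝ) :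
    Gamma a κ₁ ω = (fun t : ℝ =>
      -Complex.exp ((Complex.I * (ω : ℂ) * (Real.sqrt κ₁ : ℂ)) * t) /
        (((4 * Real.pi * Real.sqrt a.det) * t : ℝ) : ℂ)) ∘ (fun y => Real.sqrt (qf a y)) := rfl

lemma Gamma_norm (a : Matrix (Fin 3) (Fin 3) ℝ) (ha : a.PosDef) (κ₁ ω : ℝ) {x : E3}
    (hx0 : x ≠ 0) :
    ‖Gamma a κ₁ ω x‖ = 1 / (4 * Real.pi * Real.sqrt a.det * Real.sqrt (qf a x)) := by
  have hq : 0 < qf a x := qf_pos a ha hx0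
  have hd : 0 < Real.sqrt a.det := Real.sqrt_pos.mpr ha.det_pos
  have hr : 0 < Real.sqrt (qf a x) := Real.sqrt_pos.mpr hq
  have hpi := Real.pi_pos
  rw [Gamma, norm_div, norm_neg, Complex.norm_exp]
  have hre : (Complex.I * (ω : ℂ) * (Real.sqrt κ₁ : ℂ) * (Real.sqrt (qf a x) : ℂ)).re = 0 := by
    simp [Complex.mul_re, Complex.mul_im]
  rw [hre, Real.exp_zero, Complex.norm_real, Real.norm_eq_abs, abs_of_pos (by positivity)]

lemma hasFDerivAt_Gamma (a : Matrix (Fin 3) (Fin 3) ℝ) (ha : a.PosDef) (κ₁ ω : ℝ)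
    {x : E3} (hx0 : x ≠ 0) :
    HasFDerivAt (𝕜 := ℝ) (Gamma a κ₁ ω)
      ((ContinuousLinearMap.smulRight (1 : ℝ →L[ℝ] ℝ)
          ((Complex.I * (ω : ℂ) * (Real.sqrt κ₁ : ℂ) - ((Real.sqrt (qf a x) : ℝ) : ℂ)⁻¹)
            * Gamma a κ₁ ω x)).comp
        ((1 / (2 * Real.sqrt (qf a x))) •
          (∑ i, ∑ j, a⁻¹ i j • ((x j) • (EuclideanSpace.proj (𝕜 := ℝ) i) +
            (x i) • (EuclideanSpace.proj (𝕜 := ℝ) j))))) x := by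
  have hq : 0 < qf a x := qf_pos a ha hx0
  have hr : 0 < Real.sqrt (qf a x) := Real.sqrt_pos.mpr hq
  have hd : 0 < Real.sqrt a.det := Real.sqrt_pos.mpr ha.det_pos
  have hpi := Real.pi_pos
  have hK : 0 < 4 * Real.pi * Real.sqrt a.det := by positivity
  have hsq : HasFDerivAt (𝕜 := ℝ) (fun y : E3 => Real.sqrt (qf a y))
      ((1 / (2 * Real.sqrt (qf a x))) •
        (∑ i, ∑ j, a⁻¹ i j • ((x j) • (EuclideanSpace.proj (𝕜 := ℝ) i) +
          (x i) • (EuclideanSpace.proj (𝕜 := ℝ) j)))) x := by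
    have := (Real.hasDerivAt_sqrt hq.ne').comp_hasFDerivAt x (hasFDerivAt_qf a x)
    exact this
  have hh := hasDerivAt_h (Complex.I * (ω : ℂ) * (Real.sqrt κ₁ : ℂ))
    (4 * Real.pi * Real.sqrt a.det) (Real.sqrt (qf a x)) hK hr
  rw [Gamma_eq_comp]
  exact (hasDerivAt_iff_hasFDerivAt.mp hh).comp x hsq

lemma xi_eq (a : Matrix (Fin 3) (Fin 3) ℝ) (ha : a.PosDef) (κ₁ ω : ℝ) {x : E3}
    (hx0 : x ≠ 0) (k : Fin 3) :
    xiVec a κ₁ ω (fun i => ‖x‖⁻¹ * x i) k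
      = ω * Real.sqrt κ₁ * (a⁻¹.mulVec (fun j => x j) k) / Real.sqrt (qf a x) := by
  have hnx : 0 < ‖x‖ := norm_pos_iff.mpr hx0
  have hq := qf_pos a ha hx0
  have hr := Real.sqrt_pos.mpr hq
  have hmv : a⁻¹.mulVec (fun i => ‖x‖⁻¹ * x i) = ‖x‖⁻¹ • a⁻¹.mulVec (fun j => x j) := by
    rw [← Matrix.mulVec_smul]
    congr 1
  have hsum : (∑ i, a⁻¹.mulVec (fun i => ‖x‖⁻¹ * x i) i * (‖x‖⁻¹ * x i))
      = (‖x‖⁻¹) ^ 2 * qf a x := by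
    rw [hmv, qf, Finset.mul_sum]
    exact Finset.sum_congr rfl fun i _ => by simp [Pi.smul_apply, smul_eq_mul]; ring
  have hsqrt : Real.sqrt ((‖x‖⁻¹) ^ 2 * qf a x) = ‖x‖⁻¹ * Real.sqrt (qf a x) := by
    rw [Real.sqrt_mul (sq_nonneg _), Real.sqrt_sq (by positivity)]
  rw [xiVec, hsum, hsqrt, Pi.smul_apply, hmv, Pi.smul_apply]
  simp only [smul_eq_mul]
  field_simp

lemma pd_Gamma (a : Matrix (Fin 3) (Fin 3) ℝ) (ha : a.PosDef) (hsym : a.IsSymm)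
    (κ₁ ω : ℝ) {x : E3} (hx0 : x ≠ 0) (k : Fin 3) :
    fderiv ℝ (Gamma a κ₁ ω) x (EuclideanSpace.single k 1)
      = ((a⁻¹.mulVec (fun j => x j) k / Real.sqrt (qf a x) : ℝ) : ℂ)
        * ((Complex.I * (ω : ℂ) * (Real.sqrt κ₁ : ℂ) - ((Real.sqrt (qf a x) : ℝ) : ℂ)⁻¹)
          * Gamma a κ₁ ω x) := by
  have hq : 0 < qf a x := qf_pos a ha hx0
  have hr : 0 < Real.sqrt (qf a x) := Real.sqrt_pos.mpr hq
  rw [(hasFDerivAt_Gamma a ha κ₁ ω hx0).fderiv]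
  rw [ContinuousLinearMap.comp_apply, ContinuousLinearMap.smul_apply, Lq_apply a hsym x k,
    ContinuousLinearMap.smulRight_apply, ContinuousLinearMap.one_apply]
  rw [smul_eq_mul, Complex.real_smul]
  have hc : (1 / (2 * Real.sqrt (qf a x)) * (2 * a⁻¹.mulVec (fun j => x j) k))
      = a⁻¹.mulVec (fun j => x j) k / Real.sqrt (qf a x) := by
    field_simp
  rw [hc]


/-- `Γ(·,ω)` satisfies the Sommerfeld-type radiation conditions
associated with `A₁`: there are `C > 0`, `R > 0` such that for `|x| ≥ R` and
`k = 1,2,3`, `|Γ(x,ω)| ≤ C/|x|` and `|∂_kΓ(x,ω) − i ξ_k(x/|x|) Γ(x,ω)| ≤ C/|x|²`. -/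
theorem stmt3 (a : Matrix (Fin 3) (Fin 3) ℝ) (ha : a.PosDef) (hsym : a.IsSymm)
    (κ₁ ω : ℝ) (hκ : 0 < κ₁) (hω : 0 < ω) :
    ∃ C > (0 : ℝ), ∃ R > (0 : ℝ), ∀ x : E3, R ≤ ‖x‖ → ∀ k : Fin 3,
      ‖Gamma a κ₁ ω x‖ ≤ C / ‖x‖ ∧
      ‖pd (Gamma a κ₁ ω) k x
          - Complex.I * ((xiVec a κ₁ ω (fun i => ‖x‖⁻¹ * x i) k : ℝ) : ℂ)
            * Gamma a κ₁ ω x‖ ≤ C / ‖x‖ ^ 2 := by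
  obtain ⟨lam, hlam, hlam_lb⟩ := exists_lam a ha
  obtain ⟨M, hM, hMb⟩ := mulVec_bound a
  have hd : 0 < Real.sqrt a.det := Real.sqrt_pos.mpr ha.det_pos
  have hpi := Real.pi_pos
  have hK : 0 < 4 * Real.pi * Real.sqrt a.det := by positivity
  have hs : 0 < Real.sqrt lam := Real.sqrt_pos.mpr hlam
  refine ⟨1 / (4 * Real.pi * Real.sqrt a.det * Real.sqrt lam)
      + M / (4 * Real.pi * Real.sqrt a.det * Real.sqrt lam ^ 3) + 1, by positivity,
    1, one_pos, fun x hx k => ?_⟩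
  have hnx : 0 < ‖x‖ := lt_of_lt_of_le one_pos hx
  have hx0 : x ≠ 0 := norm_pos_iff.mp hnx
  have hq : 0 < qf a x := qf_pos a ha hx0
  have hr : 0 < Real.sqrt (qf a x) := Real.sqrt_pos.mpr hq
  have hr_lb : Real.sqrt lam * ‖x‖ ≤ Real.sqrt (qf a x) := by
    have h2 : Real.sqrt (lam * ‖x‖ ^ 2) = Real.sqrt lam * ‖x‖ := by
      rw [Real.sqrt_mul hlam.le, Real.sqrt_sq (norm_nonneg x)]
    rw [← h2]
    exact Real.sqrt_le_sqrt (hlam_lb x)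
  have hgk : |a⁻¹.mulVec (fun j => x j) k| ≤ M * ‖x‖ := hMb x k
  have hGn : ‖Gamma a κ₁ ω x‖
      = 1 / (4 * Real.pi * Real.sqrt a.det * Real.sqrt (qf a x)) :=
    Gamma_norm a ha κ₁ ω hx0
  constructor
  · -- first bound
    rw [hGn, div_le_div_iff₀ (by positivity) hnx]
    have key : 0 ≤ (1 / (4 * Real.pi * Real.sqrt a.det * Real.sqrt lam)) *
        ((4 * Real.pi * Real.sqrt a.det) * (Real.sqrt (qf a x) - Real.sqrt lam * ‖x‖)) := by
      have : 0 ≤ Real.sqrt (qf a x) - Real.sqrt lam * ‖x‖ := by linarith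
      positivity
    have hexp : (1 / (4 * Real.pi * Real.sqrt a.det * Real.sqrt lam)) *
        ((4 * Real.pi * Real.sqrt a.det) * (Real.sqrt (qf a x) - Real.sqrt lam * ‖x‖))
        = (1 / (4 * Real.pi * Real.sqrt a.det * Real.sqrt lam)) *
          ((4 * Real.pi * Real.sqrt a.det) * Real.sqrt (qf a x)) - ‖x‖ := by
      field_simp
    have h0 : 0 ≤ M / (4 * Real.pi * Real.sqrt a.det * Real.sqrt lam ^ 3) := by positivity
    nlinarith [mul_pos hK hr]
  · -- second bound
    have hdiff : pd (Gamma a κ₁ ω) k x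
        - Complex.I * ((xiVec a κ₁ ω (fun i => ‖x‖⁻¹ * x i) k : ℝ) : ℂ) * Gamma a κ₁ ω x
        = (((-(a⁻¹.mulVec (fun j => x j) k) / Real.sqrt (qf a x) ^ 2 : ℝ)) : ℂ)
          * Gamma a κ₁ ω x := by
      rw [pd, pd_Gamma a ha hsym κ₁ ω hx0 k, xi_eq a ha κ₁ ω hx0 k]
      have hrne : ((Real.sqrt (qf a x) : ℝ) : ℂ) ≠ 0 := by
        simp only [ne_eq, Complex.ofReal_eq_zero]
        exact hr.ne'
      push_cast
      field_simp
      ring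
    rw [hdiff, norm_mul, Complex.norm_real, Real.norm_eq_abs, hGn]
    rw [abs_div, abs_neg, abs_of_pos (by positivity : (0:ℝ) < Real.sqrt (qf a x) ^ 2)]
    -- now: (|g k| / r^2) * (1/(K*r)) ≤ C / ‖x‖^2
    have step1 : |a⁻¹.mulVec (fun j => x j) k| / Real.sqrt (qf a x) ^ 2 *
          (1 / (4 * Real.pi * Real.sqrt a.det * Real.sqrt (qf a x)))
        = |a⁻¹.mulVec (fun j => x j) k| /
          (4 * Real.pi * Real.sqrt a.det * Real.sqrt (qf a x) ^ 3) := by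
      rw [div_mul_div_comm, mul_one]
      congr 1
      ring
    rw [step1]
    have hden_le : 4 * Real.pi * Real.sqrt a.det * (Real.sqrt lam * ‖x‖) ^ 3
        ≤ 4 * Real.pi * Real.sqrt a.det * Real.sqrt (qf a x) ^ 3 := by
      have := pow_le_pow_left₀ (by positivity : (0:ℝ) ≤ Real.sqrt lam * ‖x‖) hr_lb 3
      nlinarith
    have step2 : |a⁻¹.mulVec (fun j => x j) k| /
          (4 * Real.pi * Real.sqrt a.det * Real.sqrt (qf a x) ^ 3)
        ≤ (M * ‖x‖) / (4 * Real.pi * Real.sqrt a.det * (Real.sqrt lam * ‖x‖) ^ 3) :=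
      div_le_div₀ (by positivity) hgk (by positivity) hden_le
    have step3 : (M * ‖x‖) / (4 * Real.pi * Real.sqrt a.det * (Real.sqrt lam * ‖x‖) ^ 3)
        = (M / (4 * Real.pi * Real.sqrt a.det * Real.sqrt lam ^ 3)) / ‖x‖ ^ 2 := by
      field_simp
    rw [step3] at step2
    have h1 : 0 ≤ 1 / (4 * Real.pi * Real.sqrt a.det * Real.sqrt lam) := by positivity
    exact step2.trans (div_le_div₀ (by positivity) (by linarith) (by positivity) le_rfl)
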